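/- Scaling property of second-order TGV: let r > 0 and set Ω_r := r⁻¹Ω = { x ∈ ℝ^d : r x ∈ Ω }. For every locally integrable u : Ω → ℝ, the rescaled function ρ_r u : Ω_r → ℝ, (ρ_r u)(x) := u(r x), satisfies TGV²_{(α₀,α₁)}(ρ_r u) (computed on the domain Ω_r) = r^{−d} · TGV²_{(α₀ r², α₁ r)}(u) (computed on the domain Ω). -/

import Mathlib

open MeasureTheory Filter Topology
open scoped ENNReal Pointwise

noncomputable section

/-- Partial derivative `∂f/∂x_j` of a scalar function on `ℝ^d`. -/
def pd {d : ℕ} (j : Fin d) (f : (Fin d → ℝ) → ℝ) (x : Fin d → ℝ) : ℝ :=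
  fderiv ℝ f x (Pi.single j 1)

/-- Divergence of a matrix field: `(div v)_i = ∑_j ∂v_ij/∂x_j`. -/
def mdiv {d : ℕ} (v : (Fin d → ℝ) → Fin d → Fin d → ℝ) (x : Fin d → ℝ) (i : Fin d) : ℝ :=
  ∑ j, pd j (fun y => v y i j) x

/-- Second divergence `div² v = ∑_{i,j} ∂²v_ij/∂x_i∂x_j`. -/
def mdiv2 {d : ℕ} (v : (Fin d → ℝ) → Fin d → Fin d → ℝ) (x : Fin d → ℝ) : ℝ :=
  ∑ i, ∑ j, pd i (pd j (fun y => v y i j)) x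

/-- Euclidean norm of a vector in `ℝ^d`. -/
def enorm2 {d : ℕ} (w : Fin d → ℝ) : ℝ := Real.sqrt (∑ i, (w i) ^ 2)

/-- Frobenius-type norm of a symmetric matrix: `(∑_i |M_ii|² + 2 ∑_{i<j} |M_ij|²)^(1/2)`. -/
def fnorm2 {d : ℕ} (M : Fin d → Fin d → ℝ) : ℝ :=
  Real.sqrt ((∑ i, (M i i) ^ 2) + 2 * ∑ i, ∑ j, if i < j then (M i j) ^ 2 else 0)

/-- Admissible test fields for second-order TGV: `v ∈ C_c²(Ω, S^{d×d})`,
`‖v‖_∞ ≤ α₀`, `‖div v‖_∞ ≤ α₁`. -/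
def TGVtest {d : ℕ} (Ω : Set (Fin d → ℝ)) (α₀ α₁ : ℝ)
    (v : (Fin d → ℝ) → Fin d → Fin d → ℝ) : Prop :=
  ContDiff ℝ 2 v ∧ HasCompactSupport v ∧ tsupport v ⊆ Ω ∧
    (∀ x i j, v x i j = v x j i) ∧
    (∀ x ∈ Ω, fnorm2 (v x) ≤ α₀) ∧
    (∀ x ∈ Ω, enorm2 (mdiv v x) ≤ α₁)

/-- Second-order Total Generalized Variation. -/
def TGV2 {d : ℕ} (Ω : Set (Fin d → ℝ)) (α₀ α₁ : ℝ) (u : (Fin d → ℝ) → ℝ) : ℝ≥0∞ :=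
  ⨆ (v) (_ : TGVtest Ω α₀ α₁ v), ENNReal.ofReal (∫ x in Ω, u x * mdiv2 v x)

/-- Admissible test fields for the total variation: `φ ∈ C_c¹(Ω, ℝ^d)`, `‖φ‖_∞ ≤ 1`. -/
def TVtest {d : ℕ} (Ω : Set (Fin d → ℝ)) (φ : (Fin d → ℝ) → Fin d → ℝ) : Prop :=
  ContDiff ℝ 1 φ ∧ HasCompactSupport φ ∧ tsupport φ ⊆ Ω ∧ ∀ x ∈ Ω, enorm2 (φ x) ≤ 1

/-- Divergence of a vector field. -/
def vdiv {d : ℕ} (φ : (Fin d → ℝ) → Fin d → ℝ) (x : Fin d → ℝ) : ℝ :=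
  ∑ j, pd j (fun y => φ y j) x

/-- Total variation. -/
def TVar {d : ℕ} (Ω : Set (Fin d → ℝ)) (u : (Fin d → ℝ) → ℝ) : ℝ≥0∞ :=
  ⨆ (φ) (_ : TVtest Ω φ), ENNReal.ofReal (∫ x in Ω, u x * vdiv φ x)

/-- Radon norm `‖Du - w‖_M` of the distributional derivative of `u` minus `w`. -/
def MnormDuSub {d : ℕ} (Ω : Set (Fin d → ℝ)) (u : (Fin d → ℝ) → ℝ)
    (w : (Fin d → ℝ) → Fin d → ℝ) : ℝ≥0∞ :=
  ⨆ (φ) (_ : TVtest Ω φ),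
    ENNReal.ofReal (∫ x in Ω, (u x * vdiv φ x + ∑ i, w x i * φ x i))

/-- Test fields for the Radon norm of the symmetrized derivative:
`v ∈ C_c²(Ω, S^{d×d})` with `‖v‖_∞ ≤ 1`. -/
def Etest {d : ℕ} (Ω : Set (Fin d → ℝ)) (v : (Fin d → ℝ) → Fin d → Fin d → ℝ) : Prop :=
  ContDiff ℝ 2 v ∧ HasCompactSupport v ∧ tsupport v ⊆ Ω ∧
    (∀ x i j, v x i j = v x j i) ∧ (∀ x ∈ Ω, fnorm2 (v x) ≤ 1)

/-- Radon norm `‖ℰw‖_M` of the distributional symmetrized derivative of `w`. -/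
def MnormEw {d : ℕ} (Ω : Set (Fin d → ℝ)) (w : (Fin d → ℝ) → Fin d → ℝ) : ℝ≥0∞ :=
  ⨆ (v) (_ : Etest Ω v), ENNReal.ofReal (∫ x in Ω, ∑ i, w x i * mdiv v x i)

/-! ### Auxiliary lemmas for the scaling theorem -/

section Aux
open Set Function Pointwise

lemma hasFDerivAt_smul' {d : ℕ} (c : ℝ) (x : Fin d → ℝ) :
    HasFDerivAt (fun y : Fin d → ℝ => c • y)
      (c • ContinuousLinearMap.id ℝ (Fin d → ℝ)) x := by
  simpa using (c • ContinuousLinearMap.id ℝ (Fin d → ℝ)).hasFDerivAt (x := x)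

lemma pd_comp_smul {d : ℕ} (c : ℝ) (f : (Fin d → ℝ) → ℝ) {x : Fin d → ℝ}
    (hf : DifferentiableAt ℝ f (c • x)) (j : Fin d) :
    pd j (fun y => f (c • y)) x = c * pd j f (c • x) := by
  have h := hf.hasFDerivAt.comp x (hasFDerivAt_smul' c x)
  have h2 : HasFDerivAt (fun y => f (c • y))
      ((fderiv ℝ f (c • x)).comp (c • ContinuousLinearMap.id ℝ (Fin d → ℝ))) x := h
  unfold pd
  rw [h2.fderiv]
  simp [mul_comm]

lemma pd_const_mul {d : ℕ} (a : ℝ) (f : (Fin d → ℝ) → ℝ) {x : Fin d → ℝ}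
    (hf : DifferentiableAt ℝ f x) (j : Fin d) :
    pd j (fun y => a * f y) x = a * pd j f x := by
  unfold pd
  rw [fderiv_const_mul hf]
  simp

lemma pd_contDiff {d : ℕ} (f : (Fin d → ℝ) → ℝ) (hf : ContDiff ℝ 2 f) (j : Fin d) :
    ContDiff ℝ 1 (pd j f) := by
  have h1 : ContDiff ℝ 1 (fun x => fderiv ℝ f x) := hf.fderiv_right (by norm_num)
  exact (ContinuousLinearMap.apply ℝ ℝ (Pi.single j 1 : Fin d → ℝ)).contDiff.comp h1

lemma enorm2_smul' {d : ℕ} (a : ℝ) (w : Fin d → ℝ) :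
    enorm2 (fun i => a * w i) = |a| * enorm2 w := by
  unfold enorm2
  rw [← Real.sqrt_sq_eq_abs, ← Real.sqrt_mul (sq_nonneg a), Finset.mul_sum]
  congr 1
  exact Finset.sum_congr rfl fun i _ => by ring

lemma fnorm2_smul' {d : ℕ} (a : ℝ) (M : Fin d → Fin d → ℝ) :
    fnorm2 (fun i j => a * M i j) = |a| * fnorm2 M := by
  unfold fnorm2
  rw [← Real.sqrt_sq_eq_abs, ← Real.sqrt_mul (sq_nonneg a)]
  congr 1
  simp only [mul_add, Finset.mul_sum, mul_ite, mul_zero, mul_pow]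
  ring_nf

/-- The rescaled test field. -/
def Phi {d : ℕ} (c : ℝ) (v : (Fin d → ℝ) → Fin d → Fin d → ℝ) :
    (Fin d → ℝ) → Fin d → Fin d → ℝ :=
  fun y i j => c ^ 2 * v (c⁻¹ • y) i j

lemma comp_contDiff {d : ℕ} {v : (Fin d → ℝ) → Fin d → Fin d → ℝ}
    (hv : ContDiff ℝ 2 v) (i j : Fin d) : ContDiff ℝ 2 (fun y => v y i j) := by
  exact (ContinuousLinearMap.proj j).contDiff.comp
    ((ContinuousLinearMap.proj i).contDiff.comp hv)

lemma contDiff_smul_map {d : ℕ} (c : ℝ) {n : ℕ∞} :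
    ContDiff ℝ n (fun y : Fin d → ℝ => c • y) := by
  exact contDiff_id.const_smul c

lemma pd_Phi {d : ℕ} {c : ℝ} (hc : c ≠ 0) {v : (Fin d → ℝ) → Fin d → Fin d → ℝ}
    (hv : ContDiff ℝ 2 v) (i j : Fin d) (x : Fin d → ℝ) :
    pd j (fun y => Phi c v y i j) x = c * pd j (fun y => v y i j) (c⁻¹ • x) := by
  have hg : ContDiff ℝ 2 (fun y => v y i j) := comp_contDiff hv i j
  have hgd : Differentiable ℝ (fun y => v y i j) := hg.differentiable (by norm_num)
  have h1 : DifferentiableAt ℝ (fun y => v (c⁻¹ • y) i j) x :=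
    (hgd (c⁻¹ • x)).comp x (hasFDerivAt_smul' c⁻¹ x).differentiableAt
  have h2 : pd j (fun y => Phi c v y i j) x
      = c ^ 2 * pd j (fun y => v (c⁻¹ • y) i j) x := pd_const_mul _ _ h1 j
  rw [h2, pd_comp_smul c⁻¹ (fun y => v y i j) (hgd _) j]
  field_simp

lemma mdiv_Phi {d : ℕ} {c : ℝ} (hc : c ≠ 0) {v : (Fin d → ℝ) → Fin d → Fin d → ℝ}
    (hv : ContDiff ℝ 2 v) (x : Fin d → ℝ) (i : Fin d) :
    mdiv (Phi c v) x i = c * mdiv v (c⁻¹ • x) i := by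
  unfold mdiv
  rw [Finset.mul_sum]
  exact Finset.sum_congr rfl fun j _ => pd_Phi hc hv i j x

lemma mdiv2_Phi {d : ℕ} {c : ℝ} (hc : c ≠ 0) {v : (Fin d → ℝ) → Fin d → Fin d → ℝ}
    (hv : ContDiff ℝ 2 v) (x : Fin d → ℝ) :
    mdiv2 (Phi c v) x = mdiv2 v (c⁻¹ • x) := by
  unfold mdiv2
  refine Finset.sum_congr rfl fun i _ => Finset.sum_congr rfl fun j _ => ?_
  have hg : ContDiff ℝ 2 (fun y => v y i j) := comp_contDiff hv i j
  have hpd : ContDiff ℝ 1 (pd j (fun y => v y i j)) := pd_contDiff _ hg j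
  have hfun : pd j (fun y => Phi c v y i j)
      = fun x => c * pd j (fun y => v y i j) (c⁻¹ • x) := funext (pd_Phi hc hv i j)
  rw [hfun]
  have h1 : DifferentiableAt ℝ (fun x => pd j (fun y => v y i j) (c⁻¹ • x)) x :=
    ((hpd.differentiable one_ne_zero) (c⁻¹ • x)).comp x (hasFDerivAt_smul' c⁻¹ x).differentiableAt
  rw [pd_const_mul _ _ h1 i, pd_comp_smul c⁻¹ _ ((hpd.differentiable one_ne_zero) _) i]
  field_simp

lemma Phi_test {d : ℕ} {S : Set (Fin d → ℝ)} {α₀ α₁ c : ℝ} (hc : 0 < c)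
    {v : (Fin d → ℝ) → Fin d → Fin d → ℝ} (hv : TGVtest S α₀ α₁ v) :
    TGVtest {y : Fin d → ℝ | c⁻¹ • y ∈ S} (α₀ * c ^ 2) (α₁ * c) (Phi c v) := by
  obtain ⟨h2, hcs, hsupp, hsym, hb0, hb1⟩ := hv
  have hc' : c ≠ 0 := hc.ne'
  have hci : (c⁻¹ : ℝ) ≠ 0 := inv_ne_zero hc'
  have hPhi_eq : Phi c v = fun y => (c ^ 2 : ℝ) • v (c⁻¹ • y) := by
    funext y i j; simp [Phi]
  refine ⟨?_, ?_, ?_, ?_, ?_, ?_⟩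
  · rw [hPhi_eq]
    exact (h2.comp (contDiff_smul_map c⁻¹)).const_smul _
  · have hcomp : HasCompactSupport (v ∘ (Homeomorph.smulOfNeZero (c⁻¹ : ℝ) hci)) :=
      hcs.comp_homeomorph _
    refine hcomp.mono ?_
    intro y hy
    simp only [mem_support] at hy ⊢
    intro h0
    apply hy
    funext i j
    have hz : v (c⁻¹ • y) = 0 := h0
    simp [Phi, hz]
  · have hcl : IsClosed ((fun y : Fin d → ℝ => c⁻¹ • y) ⁻¹' tsupport v) :=
      (isClosed_tsupport v).preimage (continuous_const_smul _)
    have hsub : tsupport (Phi c v) ⊆ (fun y : Fin d → ℝ => c⁻¹ • y) ⁻¹' tsupport v := by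
      refine closure_minimal ?_ hcl
      intro y hy
      simp only [mem_support] at hy
      refine mem_preimage.mpr (subset_closure ?_)
      simp only [mem_support]
      intro h0
      apply hy
      funext i j
      simp [Phi, congrFun (congrFun h0 i) j]
    exact fun y hy => hsupp (hsub hy)
  · intro x i j; simp [Phi, hsym]
  · intro x hx
    have h : fnorm2 (Phi c v x) = |c ^ 2| * fnorm2 (v (c⁻¹ • x)) :=
      fnorm2_smul' (c ^ 2) (v (c⁻¹ • x))
    rw [h, abs_of_nonneg (sq_nonneg c)]
    have := hb0 (c⁻¹ • x) hx
    have h0 : (0:ℝ) < c ^ 2 := by positivity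
    calc c ^ 2 * fnorm2 (v (c⁻¹ • x)) ≤ c ^ 2 * α₀ := by
          exact mul_le_mul_of_nonneg_left this h0.le
      _ = α₀ * c ^ 2 := mul_comm _ _
  · intro x hx
    have hm : mdiv (Phi c v) x = fun i => c * mdiv v (c⁻¹ • x) i :=
      funext (mdiv_Phi hc' h2 x)
    rw [hm, enorm2_smul', abs_of_pos hc]
    have := hb1 (c⁻¹ • x) hx
    calc c * enorm2 (mdiv v (c⁻¹ • x)) ≤ c * α₁ := mul_le_mul_of_nonneg_left this hc.le
      _ = α₁ * c := mul_comm _ _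

end Aux

/-- Scaling property of second-order TGV. -/
theorem tgv2_scaling {d : ℕ} (hd : 1 ≤ d) (Ω : Set (Fin d → ℝ))
    (hΩo : IsOpen Ω) (hΩb : Bornology.IsBounded Ω)
    (α₀ α₁ : ℝ) (hα₀ : 0 < α₀) (hα₁ : 0 < α₁)
    (u : (Fin d → ℝ) → ℝ) (hu : LocallyIntegrableOn u Ω)
    (r : ℝ) (hr : 0 < r) :
    TGV2 {x : Fin d → ℝ | r • x ∈ Ω} α₀ α₁ (fun x => u (r • x))
      = ENNReal.ofReal ((r ^ d)⁻¹) * TGV2 Ω (α₀ * r ^ 2) (α₁ * r) u := by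
  have hr' : r ≠ 0 := hr.ne'
  set Ωr : Set (Fin d → ℝ) := {x : Fin d → ℝ | r • x ∈ Ω} with hΩr
  have hmemΩr : ∀ y : Fin d → ℝ, y ∈ Ωr ↔ r • y ∈ Ω := fun y => Iff.rfl
  have hsmul : r • Ωr = Ω := by
    ext y
    rw [Set.mem_smul_set_iff_inv_smul_mem₀ hr', hmemΩr, smul_inv_smul₀ hr']
  have hfr : Module.finrank ℝ (Fin d → ℝ) = d := by
    simp [Module.finrank_fintype_fun_eq_card]
  have hcov : ∀ G : (Fin d → ℝ) → ℝ,
      ∫ x in Ωr, G (r • x) = (r ^ d)⁻¹ * ∫ y in Ω, G y := by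
    intro G
    have h := MeasureTheory.Measure.setIntegral_comp_smul_of_pos volume G Ωr hr
    rw [hfr, hsmul] at h
    rw [h, smul_eq_mul]
  -- the two key integral identities
  have key : ∀ v : (Fin d → ℝ) → Fin d → Fin d → ℝ, ContDiff ℝ 2 v →
      (∫ x in Ωr, u (r • x) * mdiv2 v x)
        = (r ^ d)⁻¹ * ∫ y in Ω, u y * mdiv2 (Phi r v) y := by
    intro v hv
    have h1 : (fun x => u (r • x) * mdiv2 v x)
        = fun x => (fun y => u y * mdiv2 (Phi r v) y) (r • x) := by
      funext x
      simp only
      rw [mdiv2_Phi hr' hv, inv_smul_smul₀ hr']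
    calc (∫ x in Ωr, u (r • x) * mdiv2 v x)
        = ∫ x in Ωr, (fun y => u y * mdiv2 (Phi r v) y) (r • x) := by rw [h1]
      _ = (r ^ d)⁻¹ * ∫ y in Ω, u y * mdiv2 (Phi r v) y := hcov (fun y => u y * mdiv2 (Phi r v) y)
  have key2 : ∀ w : (Fin d → ℝ) → Fin d → Fin d → ℝ, ContDiff ℝ 2 w →
      (∫ x in Ωr, u (r • x) * mdiv2 (Phi r⁻¹ w) x)
        = (r ^ d)⁻¹ * ∫ y in Ω, u y * mdiv2 w y := by
    intro w hw
    have h1 : (fun x => u (r • x) * mdiv2 (Phi r⁻¹ w) x)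
        = fun x => (fun y => u y * mdiv2 w y) (r • x) := by
      funext x
      simp only
      rw [mdiv2_Phi (inv_ne_zero hr') hw, inv_inv]
    calc (∫ x in Ωr, u (r • x) * mdiv2 (Phi r⁻¹ w) x)
        = ∫ x in Ωr, (fun y => u y * mdiv2 w y) (r • x) := by rw [h1]
      _ = (r ^ d)⁻¹ * ∫ y in Ω, u y * mdiv2 w y := hcov (fun y => u y * mdiv2 w y)
  simp only [TGV2, ENNReal.mul_iSup]
  apply le_antisymm
  · refine iSup₂_le fun v hv => ?_
    have hw : TGVtest Ω (α₀ * r ^ 2) (α₁ * r) (Phi r v) := by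
      have h := Phi_test hr hv
      have hset : {y : Fin d → ℝ | r⁻¹ • y ∈ Ωr} = Ω := by
        ext y
        simp only [Set.mem_setOf_eq, hmemΩr, smul_inv_smul₀ hr']
      rwa [hset] at h
    refine le_iSup₂_of_le (Phi r v) hw (le_of_eq ?_)
    rw [key v hv.1, ENNReal.ofReal_mul (by positivity)]
  · refine iSup₂_le fun w hw => ?_
    have hv : TGVtest Ωr α₀ α₁ (Phi r⁻¹ w) := by
      have h := Phi_test (inv_pos.mpr hr) hw
      have hset : {y : Fin d → ℝ | r⁻¹⁻¹ • y ∈ Ω} = Ωr := by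
        ext y
        simp only [Set.mem_setOf_eq, inv_inv, hmemΩr]
      have e0 : α₀ * r ^ 2 * r⁻¹ ^ 2 = α₀ := by field_simp
      have e1 : α₁ * r * r⁻¹ = α₁ := by field_simp
      rwa [hset, e0, e1] at h
    refine le_iSup₂_of_le (Phi r⁻¹ w) hv (le_of_eq ?_)
    rw [key2 w hw.1, ENNReal.ofReal_mul (by positivity)]

end
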